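/- arXiv:1004.0323 — 2 statements merged into one kernel-verified Lean document; each statement's English description precedes it below -/
import Mathlib

section
/- Let f be a closed relation on a compact Hausdorff space X. Let C ⊆ X be a closed set satisfying 𝒢f(C) ∩ (𝒢f)⁻¹(C) ⊆ C, and let D ⊆ X be a closed set with C contained in the interior of D. Then 𝒢f ∩ (C × C) ⊆ 𝒢(f ∩ (D × D)), and moreover 𝒢f ∩ (C × C) ⊆ 𝒞(f ∩ (C × C)). -/
/-- The image of a set `A` under a relation `f ⊆ X × Y`. -/
def relImage {X Y : Type*} (f : Set (X × Y)) (A : Set X) : Set Y :=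
  {y | ∃ x ∈ A, (x, y) ∈ f}

/-- The reverse (inverse) relation of `f ⊆ X × Y`. -/
def relInv {X Y : Type*} (f : Set (X × Y)) : Set (Y × X) :=
  {p | (p.2, p.1) ∈ f}

/-- Composition of relations: `relComp g f = g ∘ f` (first `f`, then `g`). -/
def relComp {X Y Z : Type*} (g : Set (Y × Z)) (f : Set (X × Y)) : Set (X × Z) :=
  {p | ∃ y, (p.1, y) ∈ f ∧ (y, p.2) ∈ g}

/-- A relation on `X` is transitive. -/
def RelTrans {X : Type*} (f : Set (X × X)) : Prop :=
  ∀ x y z : X, (x, y) ∈ f → (y, z) ∈ f → (x, z) ∈ f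

/-- `gRel f` is the smallest closed transitive relation containing `f`:
the intersection of all closed transitive relations containing `f`. -/
def gRel {X : Type*} [TopologicalSpace X] (f : Set (X × X)) : Set (X × X) :=
  ⋂₀ {g : Set (X × X) | f ⊆ g ∧ IsClosed g ∧ RelTrans g}

/-- `relIterate F n` is the `n`-fold composition `Fⁿ` (with `F⁰` the diagonal). -/
def relIterate {X : Type*} (F : Set (X × X)) : ℕ → Set (X × X)
  | 0 => {p : X × X | p.1 = p.2}
  | n + 1 => relComp F (relIterate F n)

/-- The orbit relation `𝒪g = ⋃_{n ≥ 1} gⁿ`. -/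
def orbitRel {X : Type*} (g : Set (X × X)) : Set (X × X) :=
  ⋃ n ∈ Set.Ici (1 : ℕ), relIterate g n

/-- The chain relation `𝒞g = ⋂_V 𝒪(V ∘ g)`, where `V` ranges over the neighborhoods
of the diagonal of `X × X`. -/
def chainRel {X : Type*} [TopologicalSpace X] (g : Set (X × X)) : Set (X × X) :=
  ⋂ V ∈ nhdsSet (Set.diagonal X), orbitRel (relComp V g)

section basics
variable {X : Type*} [TopologicalSpace X] {f g : Set (X × X)}

lemma subset_gRel : f ⊆ gRel f :=
  Set.subset_sInter fun _ hg => hg.1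

lemma gRel_min (h1 : f ⊆ g) (h2 : IsClosed g) (h3 : RelTrans g) : gRel f ⊆ g :=
  Set.sInter_subset_of_mem ⟨h1, h2, h3⟩

lemma isClosed_gRel : IsClosed (gRel f) :=
  isClosed_sInter fun _ hg => hg.2.1

lemma relTrans_gRel : RelTrans (gRel f) := by
  intro x y z hxy hyz
  intro g hg
  exact hg.2.2 x y z (hxy g hg) (hyz g hg)

lemma gRel_mono (h : f ⊆ g) : gRel f ⊆ gRel g :=
  gRel_min (h.trans subset_gRel) isClosed_gRel relTrans_gRel

lemma isClosed_relImage [CompactSpace X] [T2Space X] {A : Set X}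
    (hg : IsClosed g) (hA : IsClosed A) : IsClosed (relImage g A) := by
  have : relImage g A = Prod.snd '' (g ∩ A ×ˢ (Set.univ : Set X)) := by
    ext y
    constructor
    · rintro ⟨x, hx, hxy⟩
      exact ⟨(x, y), ⟨hxy, hx, trivial⟩, rfl⟩
    · rintro ⟨⟨x, y'⟩, ⟨hxy, hx, -⟩, rfl⟩
      exact ⟨x, hx, hxy⟩
  rw [this]
  exact (((hg.inter (hA.prod isClosed_univ)).isCompact).image continuous_snd).isClosed

lemma isClosed_relInv (hg : IsClosed g) : IsClosed (relInv g) := by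
  have : relInv g = Prod.swap ⁻¹' g := rfl
  rw [this]
  exact hg.preimage continuous_swap

end basics

section claim1
variable {X : Type*} [TopologicalSpace X] [CompactSpace X] [T2Space X]

/-- two disjoint closed sets can be separated by open sets with disjoint closures -/
lemma sep_closure {A₁ A₂ : Set X} (h1 : IsClosed A₁) (h2 : IsClosed A₂)
    (hd : Disjoint A₁ A₂) :
    ∃ O₁ O₂ : Set X, IsOpen O₁ ∧ IsOpen O₂ ∧ A₁ ⊆ O₁ ∧ A₂ ⊆ O₂ ∧
      Disjoint (closure O₁) (closure O₂) := by
  obtain ⟨U₁, U₂, hU₁, hU₂, hA₁, hA₂, hd12⟩ := normal_separation h1 h2 hd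
  obtain ⟨O₁, hO₁, hAO₁, hcO₁⟩ := normal_exists_closure_subset h1 hU₁ hA₁
  obtain ⟨O₂, hO₂, hAO₂, hcO₂⟩ := normal_exists_closure_subset h2 hU₂ hA₂
  exact ⟨O₁, O₂, hO₁, hO₂, hAO₁, hAO₂,
    hd12.mono hcO₁ hcO₂⟩

lemma claim1
    (f : Set (X × X)) (hf : IsClosed f)
    (C : Set X) (hC : IsClosed C)
    (hCun : relImage (gRel f) C ∩ relImage (relInv (gRel f)) C ⊆ C)
    (D : Set X) (hD : IsClosed D) (hCD : C ⊆ interior D) :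
    gRel f ∩ C ×ˢ C ⊆ gRel (f ∩ D ×ˢ D) := by
  classical
  set G := gRel f with hG
  set Q : Set X := relImage G C with hQ
  set P : Set X := relImage (relInv G) C with hP
  -- basic facts about P and Q
  have hQmem : ∀ {a b : X}, a ∈ Q → (a, b) ∈ G → b ∈ Q := by
    rintro a b ⟨c, hc, hca⟩ hab
    exact ⟨c, hc, relTrans_gRel c a b hca hab⟩
  have hPmem : ∀ {a b : X}, b ∈ P → (a, b) ∈ G → a ∈ P := by
    rintro a b ⟨c, hc, hbc⟩ hab
    exact ⟨c, hc, relTrans_gRel a b c hab hbc⟩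
  have hCQ : ∀ {a b : X}, a ∈ C → (a, b) ∈ G → b ∈ Q := fun ha hab => ⟨_, ha, hab⟩
  have hCP : ∀ {a b : X}, b ∈ C → (a, b) ∈ G → a ∈ P := fun hb hab => ⟨_, hb, hab⟩
  have hPQC : Q ∩ P ⊆ C := hCun
  have hQc : IsClosed Q := isClosed_relImage isClosed_gRel hC
  have hPc : IsClosed P := isClosed_relImage (isClosed_relInv isClosed_gRel) hC
  -- separation
  have hdisj : Disjoint ((P ∪ C) \ interior D) ((Q ∪ C) \ interior D) := by
    rw [Set.disjoint_left]
    rintro a ⟨haP, haD⟩ ⟨haQ, -⟩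
    rcases haP with haP | haC
    · rcases haQ with haQ | haC
      · exact haD (hCD (hPQC ⟨haQ, haP⟩))
      · exact haD (hCD haC)
    · exact haD (hCD haC)
  obtain ⟨O₁, O₂, hO₁, hO₂, hPO₁, hQO₂, hO₁₂⟩ :=
    sep_closure ((hPc.union hC).sdiff isOpen_interior) ((hQc.union hC).sdiff isOpen_interior)
      hdisj
  set E : Set X := closure O₁ ∪ D with hE
  set F : Set X := closure O₂ ∪ D with hF
  have hEc : IsClosed E := isClosed_closure.union hD
  have hFc : IsClosed F := isClosed_closure.union hD
  have hB'E : P ∪ C ⊆ interior E := by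
    have : O₁ ∪ interior D ⊆ E := Set.union_subset
      (subset_closure.trans Set.subset_union_left)
      (interior_subset.trans Set.subset_union_right)
    have hopen : IsOpen (O₁ ∪ interior D) := hO₁.union isOpen_interior
    intro a ha
    by_cases haD : a ∈ interior D
    · exact hopen.subset_interior_iff.mpr this (Or.inr haD)
    · exact hopen.subset_interior_iff.mpr this (Or.inl (hPO₁ ⟨ha, haD⟩))
  have hBF : Q ∪ C ⊆ interior F := by
    have : O₂ ∪ interior D ⊆ F := Set.union_subset
      (subset_closure.trans Set.subset_union_left)
      (interior_subset.trans Set.subset_union_right)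
    have hopen : IsOpen (O₂ ∪ interior D) := hO₂.union isOpen_interior
    intro a ha
    by_cases haD : a ∈ interior D
    · exact hopen.subset_interior_iff.mpr this (Or.inr haD)
    · exact hopen.subset_interior_iff.mpr this (Or.inl (hQO₂ ⟨ha, haD⟩))
  have hEFD : interior E ∩ interior F ⊆ D := by
    rintro a ⟨haE, haF⟩
    rcases interior_subset haE with h1 | h1
    · rcases interior_subset haF with h2 | h2
      · exact (Set.disjoint_left.mp hO₁₂ h1 h2).elim
      · exact h2
    · exact h1
  -- the absorbing sets
  set M₂ : Set X := (interior E)ᶜ with hM₂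
  set M₁ : Set X := (interior F)ᶜ with hM₁
  set K₂ : Set X := M₂ ∪ relImage G M₂ with hK₂
  set K₁ : Set X := M₁ ∪ relImage (relInv G) M₁ with hK₁
  have hMc : ∀ S : Set X, IsClosed ((interior S)ᶜ) := fun S => isOpen_interior.isClosed_compl
  have hK₂c : IsClosed K₂ :=
    ((hMc E).union (isClosed_relImage isClosed_gRel (hMc E)))
  have hK₁c : IsClosed K₁ :=
    ((hMc F).union (isClosed_relImage (isClosed_relInv isClosed_gRel) (hMc F)))
  have hK₂fwd : ∀ {a b : X}, a ∈ K₂ → (a, b) ∈ G → b ∈ K₂ := by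
    rintro a b (haM | ⟨w, hw, hwa⟩) hab
    · exact Or.inr ⟨a, haM, hab⟩
    · exact Or.inr ⟨w, hw, relTrans_gRel w a b hwa hab⟩
  have hK₁bwd : ∀ {a b : X}, b ∈ K₁ → (a, b) ∈ G → a ∈ K₁ := by
    rintro a b (hbM | ⟨w, hw, hbw⟩) hab
    · exact Or.inr ⟨b, hbM, hab⟩
    · exact Or.inr ⟨w, hw, relTrans_gRel a b w hab hbw⟩
  have hK₂C : ∀ {a : X}, a ∈ K₂ → a ∉ C := by
    rintro a (haM | ⟨w, hw, hwa⟩) haC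
    · exact haM (hB'E (Or.inr haC))
    · exact hw (hB'E (Or.inl (hCP haC hwa)))
  have hK₁C : ∀ {a : X}, a ∈ K₁ → a ∉ C := by
    rintro a (haM | ⟨w, hw, haw⟩) haC
    · exact haM (hBF (Or.inr haC))
    · exact hw (hBF (Or.inl (hCQ haC haw)))
  -- the relation g
  set G' := gRel (f ∩ D ×ˢ D) with hG'
  have hG'G : G' ⊆ G := gRel_mono Set.inter_subset_left
  set g : Set (X × X) := G' ∪ (G ∩ K₁ ×ˢ (Set.univ : Set X)) ∪ (G ∩ (Set.univ : Set X) ×ˢ K₂)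
    with hg
  have hgG : g ⊆ G := by
    rintro p ((hp | hp) | hp)
    · exact hG'G hp
    · exact hp.1
    · exact hp.1
  have hgclosed : IsClosed g :=
    ((isClosed_gRel.union (isClosed_gRel.inter (hK₁c.prod isClosed_univ))).union
      (isClosed_gRel.inter (isClosed_univ.prod hK₂c)))
  have hgtrans : RelTrans g := by
    intro x y z hxy hyz
    have hxyG : (x, y) ∈ G := hgG hxy
    have hyzG : (y, z) ∈ G := hgG hyz
    have hxzG : (x, z) ∈ G := relTrans_gRel x y z hxyG hyzG
    rcases hyz with (hyz | hyz) | hyz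
    · rcases hxy with (hxy | hxy) | hxy
      · exact Or.inl (Or.inl (relTrans_gRel x y z hxy hyz))
      · exact Or.inl (Or.inr ⟨hxzG, hxy.2.1, trivial⟩)
      · exact Or.inr ⟨hxzG, trivial, hK₂fwd hxy.2.2 hyzG⟩
    · exact Or.inl (Or.inr ⟨hxzG, hK₁bwd hyz.2.1 hxyG, trivial⟩)
    · exact Or.inr ⟨hxzG, trivial, hyz.2.2⟩
  have hfg : f ⊆ g := by
    rintro ⟨a, b⟩ hab
    have habG : (a, b) ∈ G := subset_gRel hab
    by_cases haD : a ∈ D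
    · by_cases hbD : b ∈ D
      · exact Or.inl (Or.inl (subset_gRel ⟨hab, haD, hbD⟩))
      · -- b ∉ D : b ∉ interior E ∩ interior F
        have hb : b ∈ M₂ ∪ M₁ := by
          by_contra h
          rw [Set.mem_union, not_or, hM₂, hM₁, Set.mem_compl_iff, Set.mem_compl_iff,
            not_not, not_not] at h
          exact hbD (hEFD ⟨h.1, h.2⟩)
        rcases hb with hb | hb
        · exact Or.inr ⟨habG, trivial, Or.inl hb⟩
        · exact Or.inl (Or.inr ⟨habG, hK₁bwd (Or.inl hb) habG, trivial⟩)
    · have ha : a ∈ M₂ ∪ M₁ := by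
        by_contra h
        rw [Set.mem_union, not_or, hM₂, hM₁, Set.mem_compl_iff, Set.mem_compl_iff,
          not_not, not_not] at h
        exact haD (hEFD ⟨h.1, h.2⟩)
      rcases ha with ha | ha
      · exact Or.inr ⟨habG, trivial, hK₂fwd (Or.inl ha) habG⟩
      · exact Or.inl (Or.inr ⟨habG, Or.inl ha, trivial⟩)
  -- conclusion
  rintro ⟨a, b⟩ ⟨habG, haC, hbC⟩
  have : (a, b) ∈ g := gRel_min hfg hgclosed hgtrans habG
  rcases this with (h | h) | h
  · exact h
  · exact absurd haC (hK₁C h.2.1)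
  · exact absurd hbC (hK₂C h.2.2)

end claim1

section iterates
variable {X : Type*}

lemma relComp_mono {g g' f f' : Set (X × X)} (hg : g ⊆ g') (hf : f ⊆ f') :
    relComp g f ⊆ relComp g' f' := by
  rintro p ⟨y, h1, h2⟩
  exact ⟨y, hf h1, hg h2⟩

lemma relIterate_mono {F F' : Set (X × X)} (h : F ⊆ F') (n : ℕ) :
    relIterate F n ⊆ relIterate F' n := by
  induction n with
  | zero => exact Set.Subset.rfl
  | succ n ih => exact relComp_mono h ih

lemma relIterate_trans {F : Set (X × X)} {a b c : X} {n m : ℕ}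
    (h1 : (a, b) ∈ relIterate F n) (h2 : (b, c) ∈ relIterate F m) :
    (a, c) ∈ relIterate F (n + m) := by
  induction m generalizing c with
  | zero =>
    have : b = c := h2
    simpa [← this] using h1
  | succ m ih =>
    obtain ⟨q, hq, hqc⟩ := h2
    exact ⟨q, ih hq, hqc⟩

lemma mem_orbitRel {g : Set (X × X)} {p : X × X} :
    p ∈ orbitRel g ↔ ∃ n, 1 ≤ n ∧ p ∈ relIterate g n := by
  simp [orbitRel, Set.mem_iUnion, Set.mem_Ici]

end iterates

section Tlemma
open UniformSpace Uniformity
variable {X : Type*} [UniformSpace X]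

lemma gRel_subset_iInter_closure_orbit (k : Set (X × X)) :
    gRel k ⊆ ⋂ (U : Set (X × X)) (_ : U ∈ 𝓤 X), closure (orbitRel (relComp U k)) := by
  apply gRel_min
  · intro p hp
    simp only [Set.mem_iInter]
    intro U hU
    apply subset_closure
    rw [mem_orbitRel]
    exact ⟨1, le_rfl, ⟨p.1, rfl, ⟨p.2, hp, refl_mem_uniformity hU⟩⟩⟩
  · exact isClosed_iInter fun U => isClosed_iInter fun _ => isClosed_closure
  · intro a b c hab hbc
    simp only [Set.mem_iInter] at hab hbc ⊢
    intro W hW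
    rw [mem_closure_iff_nhds]
    intro t ht
    rw [nhds_prod_eq, Filter.mem_prod_iff] at ht
    obtain ⟨u, hu, v, hv, huv⟩ := ht
    obtain ⟨V₁, hV₁, hV₁u⟩ := UniformSpace.mem_nhds_iff.mp hu
    obtain ⟨V₂, hV₂, hV₂v⟩ := UniformSpace.mem_nhds_iff.mp hv
    obtain ⟨t₀, ht₀, ht₀symm, ht₀W⟩ := comp_comp_symm_mem_uniformity_sets hW
    set E' : Set (X × X) := SetRel.symmetrize (V₁ ∩ V₂ ∩ t₀) with hE'
    have hE'mem : E' ∈ 𝓤 X :=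
      symmetrize_mem_uniformity (Filter.inter_mem (Filter.inter_mem hV₁ hV₂) ht₀)
    have hE'symm : SetRel.IsSymm E' := SetRel.isSymm_symmetrize
    have hE't₀ : E' ⊆ t₀ := SetRel.symmetrize_subset_self.trans Set.inter_subset_right
    have hE'V₁ : E' ⊆ V₁ :=
      SetRel.symmetrize_subset_self.trans (Set.inter_subset_left.trans Set.inter_subset_left)
    have hE'V₂ : E' ⊆ V₂ :=
      SetRel.symmetrize_subset_self.trans (Set.inter_subset_left.trans Set.inter_subset_right)
    set W' : Set (X × X) := t₀ ∩ W with hW'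
    have hW'mem : W' ∈ 𝓤 X := Filter.inter_mem ht₀ hW
    -- extract approximating points for (a,b) and (b,c)
    have hab' := hab W' hW'mem
    have hbc' := hbc W' hW'mem
    rw [mem_closure_iff_nhds] at hab' hbc'
    obtain ⟨⟨a₁, b₁⟩, ⟨haa₁, hbb₁⟩, hab₁⟩ :=
      hab' (ball a E' ×ˢ ball b E') (prod_mem_nhds (ball_mem_nhds a hE'mem)
        (ball_mem_nhds b hE'mem))
    obtain ⟨⟨b₂, c₁⟩, ⟨hbb₂, hcc₁⟩, hbc₁⟩ :=
      hbc' (ball b E' ×ˢ ball c E') (prod_mem_nhds (ball_mem_nhds b hE'mem)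
        (ball_mem_nhds c hE'mem))
    rw [mem_orbitRel] at hab₁ hbc₁
    obtain ⟨n, hn, hiter1⟩ := hab₁
    obtain ⟨n₂, hn₂, hiter2⟩ := hbc₁
    obtain ⟨n₁, rfl⟩ : ∃ n₁, n = n₁ + 1 := ⟨n - 1, by omega⟩
    obtain ⟨q, hq, r, hrk, hrb₁⟩ := hiter1
    -- splice : (r, b₂) ∈ W
    have hrb₂ : (r, b₂) ∈ W := by
      apply ht₀W
      exact ⟨b, ⟨b₁, hrb₁.1, hE't₀ (hE'symm.symm _ _ hbb₁)⟩, hE't₀ hbb₂⟩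
    have hq' : (a₁, q) ∈ relIterate (relComp W k) n₁ :=
      relIterate_mono (relComp_mono Set.inter_subset_right Set.Subset.rfl) n₁ hq
    have hsp : (a₁, b₂) ∈ relIterate (relComp W k) (n₁ + 1) :=
      ⟨q, hq', ⟨r, hrk, hrb₂⟩⟩
    have h2 : (b₂, c₁) ∈ relIterate (relComp W k) n₂ :=
      relIterate_mono (relComp_mono Set.inter_subset_right Set.Subset.rfl) n₂ hiter2
    have hac : (a₁, c₁) ∈ relIterate (relComp W k) (n₁ + 1 + n₂) :=
      relIterate_trans hsp h2
    refine ⟨(a₁, c₁), ?_, ?_⟩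
    · exact huv ⟨hV₁u (hE'V₁ haa₁), hV₂v (hE'V₂ hcc₁)⟩
    · rw [mem_orbitRel]
      exact ⟨n₁ + 1 + n₂, by omega, hac⟩

end Tlemma

open UniformSpace Uniformity

/-- Let `f` be a closed relation on a compact Hausdorff space `X`,
`C` a closed set with `𝒢f(C) ∩ 𝒢f⁻¹(C) ⊆ C`, and `D` closed with `C` contained in the
interior of `D`. Then `𝒢f ∩ (C × C) ⊆ 𝒢(f ∩ (D × D))` and
`𝒢f ∩ (C × C) ⊆ 𝒞(f ∩ (C × C))`. -/
theorem gRel_restrict_subset_of_unrevisited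
    {X : Type*} [TopologicalSpace X] [CompactSpace X] [T2Space X]
    (f : Set (X × X)) (hf : IsClosed f)
    (C : Set X) (hC : IsClosed C)
    (hCun : relImage (gRel f) C ∩ relImage (relInv (gRel f)) C ⊆ C)
    (D : Set X) (hD : IsClosed D) (hCD : C ⊆ interior D) :
    gRel f ∩ C ×ˢ C ⊆ gRel (f ∩ D ×ˢ D) ∧
      gRel f ∩ C ×ˢ C ⊆ chainRel (f ∩ C ×ˢ C) := by
  classical
  refine ⟨claim1 f hf C hC hCun D hD hCD, ?_⟩
  rintro ⟨x, y⟩ ⟨hxyG, hxC, hyC⟩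
  set h : Set (X × X) := f ∩ C ×ˢ C with hh
  letI uX : UniformSpace X := uniformSpaceOfCompactR1
  have huni : 𝓤 X = nhdsSet (Set.diagonal X) := rfl
  rw [chainRel, Set.mem_iInter₂]
  intro V hV
  have hVu : V ∈ 𝓤 X := by rw [huni]; exact hV
  -- a small open symmetric entourage U with U ○ U ○ U ⊆ V
  obtain ⟨t₀, ht₀, ht₀symm, ht₀V⟩ := comp_comp_symm_mem_uniformity_sets hVu
  set U : Set (X × X) := SetRel.symmetrize (interior t₀) with hU
  have hUu : U ∈ 𝓤 X := symmetrize_mem_uniformity (interior_mem_uniformity ht₀)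
  have hUopen : IsOpen U := isOpen_interior.inter (isOpen_interior.preimage continuous_swap)
  have hUsymm : SetRel.IsSymm U := SetRel.isSymm_symmetrize
  have hUt₀ : U ⊆ t₀ := SetRel.symmetrize_subset_self.trans interior_subset
  have hU3 : ∀ p q r s : X, (p, q) ∈ U → (q, r) ∈ U → (r, s) ∈ U → (p, s) ∈ V := by
    intro p q r s h1 h2 h3
    exact ht₀V ⟨r, ⟨q, hUt₀ h1, hUt₀ h2⟩, hUt₀ h3⟩
  -- the fattened version of h
  set O : Set (X × X) := {p : X × X | ∃ q ∈ h, (q.1, p.1) ∈ U ∧ (q.2, p.2) ∈ U} with hO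
  have hOopen : IsOpen O := by
    have : O = ⋃ q ∈ h, (ball q.1 U) ×ˢ (ball q.2 U) := by
      ext p
      simp only [hO, Set.mem_setOf_eq, Set.mem_iUnion, Set.mem_prod, ball]
      constructor
      · rintro ⟨q, hq, h1, h2⟩; exact ⟨q, hq, h1, h2⟩
      · rintro ⟨q, hq, h1, h2⟩; exact ⟨q, hq, h1, h2⟩
    rw [this]
    exact isOpen_biUnion fun q _ => (isOpen_ball q.1 hUopen).prod (isOpen_ball q.2 hUopen)
  have hhO : h ⊆ O := fun p hp => ⟨p, hp, refl_mem_uniformity hUu, refl_mem_uniformity hUu⟩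
  -- D₁ : closed nbhd of C with f ∩ D₁ ×ˢ D₁ ⊆ O
  have hCCO : C ×ˢ C ⊆ (f \ O)ᶜ := by
    rintro ⟨a, b⟩ ⟨haC, hbC⟩ ⟨habf, habO⟩
    exact habO (hhO ⟨habf, haC, hbC⟩)
  obtain ⟨u, v, hu, hv, hCu, hCv, huv⟩ :=
    generalized_tube_lemma hC.isCompact hC.isCompact (hf.sdiff hOopen).isOpen_compl hCCO
  obtain ⟨v₀, hv₀, hCv₀, hclv₀⟩ :=
    normal_exists_closure_subset hC (hu.inter hv) (Set.subset_inter hCu hCv)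
  set D₁ : Set X := closure v₀ with hD₁
  have hfD₁O : f ∩ D₁ ×ˢ D₁ ⊆ O := by
    rintro ⟨a, b⟩ ⟨habf, haD, hbD⟩
    by_contra hnot
    exact huv ⟨(hclv₀ haD).1, (hclv₀ hbD).2⟩ ⟨habf, hnot⟩
  -- D₂ : closed nbhd of C handling the start at x
  set O₂ : Set (X × X) := {p : X × X | ∃ r, (x, r) ∈ h ∧ (r, p.2) ∈ U} with hO₂
  have hO₂open : IsOpen O₂ := by
    have : O₂ = Prod.snd ⁻¹' (⋃ r ∈ {r : X | (x, r) ∈ h}, ball r U) := by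
      ext p
      simp only [hO₂, Set.mem_setOf_eq, Set.mem_preimage, Set.mem_iUnion, ball]
      constructor
      · rintro ⟨r, h1, h2⟩; exact ⟨r, h1, h2⟩
      · rintro ⟨r, h1, h2⟩; exact ⟨r, h1, h2⟩
    rw [this]
    exact (isOpen_biUnion fun r _ => isOpen_ball r hUopen).preimage continuous_snd
  have hxCO₂ : ({x} : Set X) ×ˢ C ⊆ (f \ O₂)ᶜ := by
    rintro ⟨a, b⟩ ⟨ha, hbC⟩ ⟨habf, habO⟩
    rcases ha with rfl
    exact habO ⟨b, ⟨habf, hxC, hbC⟩, refl_mem_uniformity hUu⟩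
  obtain ⟨N₁, N₂, hN₁, hN₂, hxN₁, hCN₂, hN₁₂⟩ :=
    generalized_tube_lemma isCompact_singleton hC.isCompact (hf.sdiff hO₂open).isOpen_compl hxCO₂
  obtain ⟨v₂, hv₂, hCv₂, hclv₂⟩ := normal_exists_closure_subset hC hN₂ hCN₂
  set D₂ : Set X := closure v₂ with hD₂
  -- the final D
  set D' : Set X := D₁ ∩ D₂ with hD'
  have hD'c : IsClosed D' := isClosed_closure.inter isClosed_closure
  have hCD' : C ⊆ interior D' := by
    intro a ha
    have : a ∈ v₀ ∩ v₂ := ⟨hCv₀ ha, hCv₂ ha⟩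
    exact (hv₀.inter hv₂).subset_interior_iff.mpr
      (Set.inter_subset_inter subset_closure subset_closure) this
  set k : Set (X × X) := f ∩ D' ×ˢ D' with hk
  have hkO : k ⊆ O := fun p hp =>
    hfD₁O ⟨hp.1, hp.2.1.1, hp.2.2.1⟩
  have hstart : ∀ a b : X, (a, b) ∈ k → a ∈ N₁ → ∃ r, (x, r) ∈ h ∧ (r, b) ∈ U := by
    intro a b hab haN₁
    have hbN₂ : b ∈ N₂ := hclv₂ hab.2.2.2
    have : (a, b) ∈ (f \ O₂)ᶜ := hN₁₂ ⟨haN₁, hbN₂⟩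
    rcases not_and_or.mp this with hnf | hno
    · exact absurd hab.1 hnf
    · rw [not_not] at hno
      exact hno
  -- apply claim1 with D'
  have hxyk : (x, y) ∈ gRel k := claim1 f hf C hC hCun D' hD'c hCD' ⟨hxyG, hxC, hyC⟩
  have hcl := gRel_subset_iInter_closure_orbit k hxyk
  simp only [Set.mem_iInter] at hcl
  have hcl := hcl U hUu
  rw [mem_closure_iff_nhds] at hcl
  obtain ⟨⟨x₁, y₁⟩, ⟨hx₁N, hy₁U⟩, horb⟩ :=
    hcl (N₁ ×ˢ {z : X | (z, y) ∈ U})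
      (prod_mem_nhds (hN₁.mem_nhds (hxN₁ rfl))
        (((hUopen.preimage (continuous_id.prodMk continuous_const)).mem_nhds
          (refl_mem_uniformity hUu))))
  rw [mem_orbitRel] at horb
  obtain ⟨n, hn, hiter⟩ := horb
  -- the key induction
  have key : ∀ n : ℕ, ∀ m : X, (x₁, m) ∈ relIterate (relComp U k) (n + 1) →
      ∃ d w, (x, d) ∈ relComp h (relIterate (relComp V h) n) ∧ (d, w) ∈ U ∧ (w, m) ∈ U := by
    intro n
    induction n with
    | zero =>
      rintro m ⟨q, hq, r₀, hr₀k, hr₀m⟩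
      have hq' : x₁ = q := hq
      subst hq'
      obtain ⟨r, hxr, hrr₀⟩ := hstart x₁ r₀ hr₀k hx₁N
      exact ⟨r, r₀, ⟨x, rfl, hxr⟩, hrr₀, hr₀m⟩
    | succ n ih =>
      rintro m' ⟨m, hm, r, hrk, hrm'⟩
      obtain ⟨d, w, hxd, hdw, hwm⟩ := ih m hm
      obtain ⟨⟨c', d'⟩, hc'd', hc'm, hd'r⟩ := hkO hrk
      have hmc' : (m, c') ∈ U := hUsymm.symm _ _ hc'm
      have hdc' : (d, c') ∈ V := hU3 d w m c' hdw hwm hmc'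
      obtain ⟨y₀, hy₀, hy₀d⟩ := hxd
      have hxc' : (x, c') ∈ relIterate (relComp V h) (n + 1) :=
        ⟨y₀, hy₀, ⟨d, hy₀d, hdc'⟩⟩
      exact ⟨d', r, ⟨c', hxc', hc'd'⟩, hd'r, hrm'⟩
  obtain ⟨n₀, rfl⟩ : ∃ n₀, n = n₀ + 1 := ⟨n - 1, by omega⟩
  obtain ⟨d, w, hxd, hdw, hwy₁⟩ := key n₀ y₁ hiter
  have hdy : (d, y) ∈ V := hU3 d w y₁ y hdw hwy₁ hy₁U
  obtain ⟨y₀, hy₀, hy₀d⟩ := hxd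
  rw [mem_orbitRel]
  exact ⟨n₀ + 1, by omega, ⟨y₀, hy₀, ⟨d, hy₀d, hdy⟩⟩⟩
end

section
/- Let f be a continuous self-map of a compact Hausdorff space X and let x ∈ X satisfy (x,x) ∈ 𝒢f, where 𝒢f is computed for the graph of f. Set E = {y ∈ X | (x,y) ∈ 𝒢f and (y,x) ∈ 𝒢f}. Then E is a closed set with f(E) = E, and the restriction of f to E is chain transitive: 𝒞(graph(f) ∩ (E × E)) = E × E. -/
section Helpers

variable {X : Type*} [TopologicalSpace X]

theorem gRel_subset_of {F R : Set (X × X)} (h1 : F ⊆ R) (h2 : IsClosed R) (h3 : RelTrans R) :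
    gRel F ⊆ R :=
  Set.sInter_subset_of_mem ⟨h1, h2, h3⟩

theorem subset_gRel' (F : Set (X × X)) : F ⊆ gRel F := fun _ hp =>
  Set.mem_sInter.2 fun _ hR => hR.1 hp

theorem isClosed_gRel' (F : Set (X × X)) : IsClosed (gRel F) :=
  isClosed_sInter fun _ hR => hR.2.1

theorem relTrans_gRel' (F : Set (X × X)) : RelTrans (gRel F) := fun a b c hab hbc =>
  Set.mem_sInter.2 fun R hR =>
    hR.2.2 a b c (Set.mem_sInter.1 hab R hR) (Set.mem_sInter.1 hbc R hR)

end Helpers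

section Steps
set_option linter.unusedSectionVars false

variable {X : Type*} [TopologicalSpace X] [CompactSpace X] [T2Space X] {f : X → X}

theorem mem_graph_gRel (f : X → X) (a : X) : (a, f a) ∈ gRel {p : X × X | p.2 = f p.1} :=
  subset_gRel' _ (show (a, f a).2 = f (a, f a).1 from rfl)

/-- invariance of `𝒢f` under `f × f`. -/
theorem gRel_invariant (hf : Continuous f) {a b : X}
    (h : (a, b) ∈ gRel {p : X × X | p.2 = f p.1}) :
    (f a, f b) ∈ gRel {p : X × X | p.2 = f p.1} := by
  have hs : gRel {p : X × X | p.2 = f p.1} ⊆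
      (fun p : X × X => (f p.1, f p.2)) ⁻¹' gRel {p : X × X | p.2 = f p.1} := by
    refine gRel_subset_of ?_ ?_ ?_
    · intro p hp
      have hp' : p.2 = f p.1 := hp
      have : (f p.1, f p.2) ∈ {q : X × X | q.2 = f q.1} := by
        show f p.2 = f (f p.1); rw [hp']
      exact subset_gRel' _ this
    · exact (isClosed_gRel' _).preimage ((hf.comp continuous_fst).prodMk (hf.comp continuous_snd))
    · intro u v w huv hvw
      exact relTrans_gRel' _ (f u) (f v) (f w) huv hvw
  exact hs h

/-- `(a,b) ∈ 𝒢f` implies `b = f a` or `(f a, b) ∈ 𝒢f`. -/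
theorem gRel_step_right (hf : Continuous f) {a b : X}
    (h : (a, b) ∈ gRel {p : X × X | p.2 = f p.1}) :
    b = f a ∨ (f a, b) ∈ gRel {p : X × X | p.2 = f p.1} := by
  have hs : gRel {p : X × X | p.2 = f p.1} ⊆
      {p : X × X | p.2 = f p.1} ∪
        {p : X × X | (f p.1, p.2) ∈ gRel {p : X × X | p.2 = f p.1}} := by
    refine gRel_subset_of (fun p hp => Set.mem_union_left _ hp) ?_ ?_
    · refine IsClosed.union (isClosed_eq continuous_snd (hf.comp continuous_fst)) ?_
      have hc : Continuous fun p : X × X => (f p.1, p.2) :=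
        (hf.comp continuous_fst).prodMk continuous_snd
      exact (isClosed_gRel' _).preimage hc
    · rintro u v w huv hvw
      rcases (Set.mem_union _ _ _).1 huv with huv | huv <;>
        rcases (Set.mem_union _ _ _).1 hvw with hvw | hvw
      · refine Set.mem_union_right _ ?_
        have h1 : (v, w) ∈ gRel {p : X × X | p.2 = f p.1} := subset_gRel' _ hvw
        have h2 : v = f u := huv
        show (f u, w) ∈ gRel {p : X × X | p.2 = f p.1}
        rw [← h2]; exact h1
      · refine Set.mem_union_right _ ?_
        have h2 : v = f u := huv
        show (f u, w) ∈ gRel {p : X × X | p.2 = f p.1}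
        rw [← h2]
        exact relTrans_gRel' _ v (f v) w (mem_graph_gRel f v) hvw
      · refine Set.mem_union_right _ ?_
        show (f u, w) ∈ gRel {p : X × X | p.2 = f p.1}
        exact relTrans_gRel' _ (f u) v w huv (subset_gRel' _ hvw)
      · refine Set.mem_union_right _ ?_
        show (f u, w) ∈ gRel {p : X × X | p.2 = f p.1}
        refine relTrans_gRel' _ (f u) (f v) w ?_ hvw
        exact relTrans_gRel' _ (f u) v (f v) huv (mem_graph_gRel f v)
  rcases (Set.mem_union _ _ _).1 (hs h) with h1 | h2
  · exact Or.inl h1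
  · exact Or.inr h2

/-- `(a,b) ∈ 𝒢f` implies `b = f a` or `b = f c` for some `c` with `(a,c) ∈ 𝒢f`. -/
theorem gRel_step_left (hf : Continuous f) {a b : X}
    (h : (a, b) ∈ gRel {p : X × X | p.2 = f p.1}) :
    b = f a ∨ ∃ c, (a, c) ∈ gRel {p : X × X | p.2 = f p.1} ∧ b = f c := by
  have himgcl : IsClosed ((fun p : X × X => (p.1, f p.2)) '' gRel {p : X × X | p.2 = f p.1}) := by
    have hc : IsCompact (gRel {p : X × X | p.2 = f p.1}) := (isClosed_gRel' _).isCompact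
    exact (hc.image (continuous_fst.prodMk (hf.comp continuous_snd))).isClosed
  have hs : gRel {p : X × X | p.2 = f p.1} ⊆
      {p : X × X | p.2 = f p.1} ∪
        (fun p : X × X => (p.1, f p.2)) '' gRel {p : X × X | p.2 = f p.1} := by
    refine gRel_subset_of (fun p hp => Set.mem_union_left _ hp)
      ((isClosed_eq continuous_snd (hf.comp continuous_fst)).union himgcl) ?_
    rintro u v w huv hvw
    rcases (Set.mem_union _ _ _).1 huv with huv | huv <;>
      rcases (Set.mem_union _ _ _).1 hvw with hvw | hvw
    · -- v = f u, w = f v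
      refine Set.mem_union_right _ ⟨(u, v), ?_, ?_⟩
      · have h2 : v = f u := huv
        have : (u, v) ∈ {p : X × X | p.2 = f p.1} := h2
        exact subset_gRel' _ this
      · have h3 : w = f v := hvw
        show ((u, v).1, f (u, v).2) = (u, w)
        simp [h3]
    · -- v = f u ; (v, m) ∈ G, w = f m
      obtain ⟨⟨v', m⟩, hm, heq⟩ := hvw
      have h1 : v' = v := congrArg Prod.fst heq
      have h2 : f m = w := congrArg Prod.snd heq
      subst h1
      refine Set.mem_union_right _ ⟨(u, m), ?_, ?_⟩
      · have hug : (u, v') ∈ gRel {p : X × X | p.2 = f p.1} := subset_gRel' _ huv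
        exact relTrans_gRel' _ u v' m hug hm
      · show ((u, m).1, f (u, m).2) = (u, w)
        simp [h2]
    · -- (u, m) ∈ G, v = f m ; w = f v
      obtain ⟨⟨u', m⟩, hm, heq⟩ := huv
      have h1 : u' = u := congrArg Prod.fst heq
      have h2 : f m = v := congrArg Prod.snd heq
      subst h1
      refine Set.mem_union_right _ ⟨(u', v), ?_, ?_⟩
      · have hmv : (m, v) ∈ gRel {p : X × X | p.2 = f p.1} := by
          refine subset_gRel' _ ?_
          show v = f m
          exact h2.symm
        exact relTrans_gRel' _ u' m v hm hmv
      · have h3 : w = f v := hvw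
        show ((u', v).1, f (u', v).2) = (u', w)
        simp [h3]
    · -- (u, m) ∈ G, v = f m ; (v, m') ∈ G, w = f m'
      obtain ⟨⟨u', m⟩, hm, hequ⟩ := huv
      obtain ⟨⟨v', m'⟩, hm', heqv⟩ := hvw
      have h1 : u' = u := congrArg Prod.fst hequ
      have h2 : f m = v := congrArg Prod.snd hequ
      have h3 : v' = v := congrArg Prod.fst heqv
      have h4 : f m' = w := congrArg Prod.snd heqv
      subst h1; subst h3
      refine Set.mem_union_right _ ⟨(u', m'), ?_, ?_⟩
      · have hmv : (m, v') ∈ gRel {p : X × X | p.2 = f p.1} := by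
          refine subset_gRel' _ ?_
          show v' = f m
          exact h2.symm
        have h5 : (u', v') ∈ gRel {p : X × X | p.2 = f p.1} :=
          relTrans_gRel' _ u' m v' hm hmv
        exact relTrans_gRel' _ u' v' m' h5 hm'
      · show ((u', m').1, f (u', m').2) = (u', w)
        simp [h4]
  rcases (Set.mem_union _ _ _).1 (hs h) with h1 | h2
  · exact Or.inl h1
  · obtain ⟨⟨a', c⟩, hc, heq⟩ := h2
    have h1 : a' = a := congrArg Prod.fst heq
    have h2 : f c = b := congrArg Prod.snd heq
    subst h1
    exact Or.inr ⟨c, hc, h2.symm⟩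

end Steps


section ChainArg

open Uniformity Topology UniformSpace

set_option linter.unusedSectionVars false

variable {X : Type*} [TopologicalSpace X] [CompactSpace X] [T2Space X]

/-- The (reflexive) order interval of `𝒢f` between `p` and `q`. -/
def intvl (f : X → X) (p q : X) : Set X :=
  {w | ((p, w) ∈ gRel {r : X × X | r.2 = f r.1} ∨ w = p) ∧
       ((w, q) ∈ gRel {r : X × X | r.2 = f r.1} ∨ w = q)}

theorem intvl_left_mem {f : X → X} {p q : X} (h : (p, q) ∈ gRel {r : X × X | r.2 = f r.1}) :
    p ∈ intvl f p q :=
  ⟨Or.inr rfl, Or.inl h⟩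

theorem intvl_right_mem {f : X → X} {p q : X} (h : (p, q) ∈ gRel {r : X × X | r.2 = f r.1}) :
    q ∈ intvl f p q :=
  ⟨Or.inl h, Or.inr rfl⟩

theorem intvl_subset_right {f : X → X} {p q r : X}
    (h : (q, r) ∈ gRel {s : X × X | s.2 = f s.1}) : intvl f p q ⊆ intvl f p r := by
  rintro w ⟨h1, h2⟩
  refine ⟨h1, ?_⟩
  rcases h2 with h2 | h2
  · exact Or.inl (relTrans_gRel' _ w q r h2 h)
  · subst h2; exact Or.inl h

theorem intvl_subset_left {f : X → X} {p q r : X}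
    (h : (p, q) ∈ gRel {s : X × X | s.2 = f s.1}) : intvl f q r ⊆ intvl f p r := by
  rintro w ⟨h1, h2⟩
  refine ⟨?_, h2⟩
  rcases h1 with h1 | h1
  · exact Or.inl (relTrans_gRel' _ p q w h h1)
  · subst h1; exact Or.inl h

theorem relImage_mono {Y : Type*} {V : Set (X × Y)} {S T : Set X} (h : S ⊆ T) :
    relImage V S ⊆ relImage V T := by
  rintro w ⟨s, hs, hsw⟩
  exact ⟨s, h hs, hsw⟩

theorem isOpen_relImage {V : Set (X × X)} (hV : IsOpen V) (S : Set X) :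
    IsOpen (relImage V S) := by
  have : relImage V S = ⋃ s ∈ S, {w | (s, w) ∈ V} := by
    ext w
    simp only [relImage, Set.mem_setOf_eq, Set.mem_iUnion]
    constructor
    · rintro ⟨s, hs, hsw⟩; exact ⟨s, hs, hsw⟩
    · rintro ⟨s, hs, hsw⟩; exact ⟨s, hs, hsw⟩
  rw [this]
  refine isOpen_biUnion fun s _ => ?_
  exact hV.preimage (Continuous.prodMk continuous_const continuous_id)

theorem mem_relImage_self {V : Set (X × X)} {S : Set X} {w : X}
    (hV : Set.diagonal X ⊆ V) (hw : w ∈ S) : w ∈ relImage V S :=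
  ⟨w, hw, hV rfl⟩

/-- Upper semicontinuity of the interval: if `intvl f p q ⊆ O` with `O` open, then the same
holds for all pairs close to `(p, q)`. -/
theorem intvl_usc (f : X → X) {p q : X} {O : Set X} (hO : IsOpen O)
    (hsub : intvl f p q ⊆ O) :
    ∃ N ∈ nhds ((p, q) : X × X), ∀ r ∈ N, intvl f r.1 r.2 ⊆ O := by
  classical
  set T : Set ((X × X) × X) :=
    {t | ((((t.1).1, t.2) ∈ gRel {r : X × X | r.2 = f r.1} ∨ t.2 = (t.1).1) ∧
          ((t.2, (t.1).2) ∈ gRel {r : X × X | r.2 = f r.1} ∨ t.2 = (t.1).2)) ∧ t.2 ∈ Oᶜ}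
     with hT
  have hTclosed : IsClosed T := by
    have h1 : IsClosed {t : (X × X) × X | ((t.1).1, t.2) ∈ gRel {r : X × X | r.2 = f r.1}} :=
      (isClosed_gRel' _).preimage ((continuous_fst.comp continuous_fst).prodMk continuous_snd)
    have h2 : IsClosed {t : (X × X) × X | t.2 = (t.1).1} :=
      isClosed_eq continuous_snd (continuous_fst.comp continuous_fst)
    have h3 : IsClosed {t : (X × X) × X | (t.2, (t.1).2) ∈ gRel {r : X × X | r.2 = f r.1}} :=
      (isClosed_gRel' _).preimage (continuous_snd.prodMk (continuous_snd.comp continuous_fst))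
    have h4 : IsClosed {t : (X × X) × X | t.2 = (t.1).2} :=
      isClosed_eq continuous_snd (continuous_snd.comp continuous_fst)
    have h5 : IsClosed {t : (X × X) × X | t.2 ∈ Oᶜ} :=
      hO.isClosed_compl.preimage continuous_snd
    exact ((h1.union h2).inter (h3.union h4)).inter h5
  have hTim : IsClosed (Prod.fst '' T) :=
    (hTclosed.isCompact.image continuous_fst).isClosed
  have hpq : ((p, q) : X × X) ∉ Prod.fst '' T := by
    rintro ⟨⟨⟨p₀, q₀⟩, w⟩, ⟨hw1, hw2⟩, heq⟩
    have hp : p₀ = p := congrArg Prod.fst heq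
    have hq : q₀ = q := congrArg Prod.snd heq
    subst hp; subst hq
    exact hw2 (hsub hw1)
  refine ⟨(Prod.fst '' T)ᶜ, hTim.isOpen_compl.mem_nhds hpq, ?_⟩
  rintro ⟨p', q'⟩ hr w hw
  by_contra hwO
  exact hr ⟨((p', q'), w), ⟨hw, hwO⟩, rfl⟩

/-- The relation of pairs of `𝒢f` joined, for every neighborhood `V` of the diagonal, by a
`V`-chain of `f` all of whose points stay `V`-close to the interval `intvl f p q`. -/
def RR (f : X → X) : Set (X × X) :=
  {pq | pq ∈ gRel {r : X × X | r.2 = f r.1} ∧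
    ∀ V ∈ nhdsSet (Set.diagonal X),
      ∃ n, 1 ≤ n ∧ ∃ c : ℕ → X, c 0 = pq.1 ∧ c n = pq.2 ∧
        (∀ i < n, (f (c i), c (i + 1)) ∈ V) ∧
        ∀ i ≤ n, c i ∈ relImage V (intvl f pq.1 pq.2)}

theorem RR_subset (f : X → X) : RR f ⊆ gRel {r : X × X | r.2 = f r.1} := fun _ h => h.1

theorem graph_subset_RR (f : X → X) : {r : X × X | r.2 = f r.1} ⊆ RR f := by
  rintro ⟨a, b⟩ hab
  have hb : b = f a := hab
  subst hb
  refine ⟨mem_graph_gRel f a, ?_⟩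
  intro V hV
  have hdiag : Set.diagonal X ⊆ V := subset_of_mem_nhdsSet hV
  refine ⟨1, le_refl 1, fun i => if i = 0 then a else f a, by simp, by simp, ?_, ?_⟩
  · intro i hi
    have hi0 : i = 0 := by omega
    subst hi0
    simp only [if_pos rfl, if_neg one_ne_zero]
    exact hdiag rfl
  · intro i _
    by_cases hi0 : i = 0
    · subst hi0
      simp only [if_pos rfl]
      exact mem_relImage_self hdiag (intvl_left_mem (mem_graph_gRel f a))
    · simp only [if_neg hi0]
      exact mem_relImage_self hdiag (intvl_right_mem (mem_graph_gRel f a))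

theorem RR_trans (f : X → X) : RelTrans (RR f) := by
  rintro p q r ⟨hpq, hchain1⟩ ⟨hqr, hchain2⟩
  refine ⟨relTrans_gRel' _ p q r hpq hqr, ?_⟩
  intro V hV
  obtain ⟨n, hn, c, hc0, hcn, hcstep, hcpt⟩ := hchain1 V hV
  obtain ⟨m, hm, d, hd0, hdm, hdstep, hdpt⟩ := hchain2 V hV
  refine ⟨n + m, by omega, fun i => if i ≤ n then c i else d (i - n), ?_, ?_, ?_, ?_⟩
  · simp only [if_pos (Nat.zero_le n)]; exact hc0
  · have h1 : ¬ n + m ≤ n := by omega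
    simp only [if_neg h1]
    have h2 : n + m - n = m := by omega
    rw [h2]; exact hdm
  · intro i hi
    by_cases h1 : i < n
    · have h2 : i ≤ n := by omega
      have h3 : i + 1 ≤ n := by omega
      simp only [if_pos h2, if_pos h3]
      exact hcstep i h1
    · have h2 : n ≤ i := by omega
      by_cases h3 : i = n
      · subst h3
        have h4 : ¬ i + 1 ≤ i := by omega
        simp only [if_pos (le_refl i), if_neg h4]
        have h5 : i + 1 - i = 1 := by omega
        rw [h5, hcn]
        have h7 := hdstep 0 (by omega)
        rw [hd0] at h7
        exact h7
      · have h4 : ¬ i ≤ n := by omega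
        have h5 : ¬ i + 1 ≤ n := by omega
        simp only [if_neg h4, if_neg h5]
        have h6 : i + 1 - n = (i - n) + 1 := by omega
        rw [h6]
        exact hdstep (i - n) (by omega)
  · intro i hi
    by_cases h1 : i ≤ n
    · simp only [if_pos h1]
      exact relImage_mono (intvl_subset_right hqr) (hcpt i h1)
    · simp only [if_neg h1]
      refine relImage_mono (intvl_subset_left hpq) (hdpt (i - n) (by omega))

theorem RR_closed {f : X → X} (hf : Continuous f) : IsClosed (RR f) := by
  refine isClosed_of_closure_subset ?_
  rintro ⟨p, q⟩ hcl
  have hpqG : (p, q) ∈ gRel {r : X × X | r.2 = f r.1} := by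
    have h1 : closure (RR f) ⊆ closure (gRel {r : X × X | r.2 = f r.1}) :=
      closure_mono (RR_subset f)
    have h2 := h1 hcl
    rwa [(isClosed_gRel' _).closure_eq] at h2
  refine ⟨hpqG, ?_⟩
  intro V hV
  letI uX : UniformSpace X := uniformSpaceOfCompactR1
  have hVU : V ∈ 𝓤 X := hV
  -- choose a small open symmetric entourage
  obtain ⟨Va, hVa, hVaV⟩ := comp_mem_uniformity_sets hVU
  obtain ⟨W, hWU, hWopen, hWsymm, hWWa⟩ := comp_open_symm_mem_uniformity_sets hVa
  have hWVa : W ⊆ Va := (subset_comp_self_of_mem_uniformity hWU).trans hWWa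
  have hVaVsub : Va ⊆ V := (subset_comp_self_of_mem_uniformity hVa).trans hVaV
  have hWV : W ⊆ V := hWVa.trans hVaVsub
  have hcomp2 : ∀ {a b c : X}, (a, b) ∈ W → (b, c) ∈ W → (a, c) ∈ V := by
    intro a b c h1 h2
    exact hVaV (SetRel.mem_comp.2 ⟨b, hWVa h1, hWVa h2⟩)
  have hcomp3 : ∀ {a b c d : X}, (a, b) ∈ W → (b, c) ∈ W → (c, d) ∈ W → (a, d) ∈ V := by
    intro a b c d h1 h2 h3
    exact hVaV (SetRel.mem_comp.2 ⟨c, hWWa (SetRel.mem_comp.2 ⟨b, h1, h2⟩), hWVa h3⟩)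
  -- uniform continuity of f
  have hUC : UniformContinuous f := CompactSpace.uniformContinuous_of_continuous hf
  have hW2 : {x : X × X | (f x.1, f x.2) ∈ W} ∈ 𝓤 X := hUC hWU
  -- the fattened interval and the usc neighborhood
  have hdiagV : Set.diagonal X ⊆ V := subset_of_mem_nhdsSet hV
  have hdiagW : Set.diagonal X ⊆ W := by
    rintro ⟨a, b⟩ hz
    have hab : a = b := hz
    subst hab
    exact refl_mem_uniformity hWU
  have hO : IsOpen (relImage W (intvl f p q)) := isOpen_relImage hWopen _
  have hIO : intvl f p q ⊆ relImage W (intvl f p q) :=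
    fun w hw => mem_relImage_self hdiagW hw
  obtain ⟨N, hN, hNprop⟩ := intvl_usc f hO hIO
  -- pick an approximating pair
  have hnbhd : N ∩ (ball p {x : X × X | (f x.1, f x.2) ∈ W} ×ˢ ball q W) ∈ 𝓝 ((p, q) : X × X) :=
    Filter.inter_mem hN (prod_mem_nhds (ball_mem_nhds p hW2) (ball_mem_nhds q hWU))
  obtain ⟨⟨p', q'⟩, ⟨⟨hNmem, hballp, hballq⟩, hR⟩⟩ :=
    mem_closure_iff_nhds.1 hcl _ hnbhd
  have hfp : (f p, f p') ∈ W := hballp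
  have hqq' : (q', q) ∈ W := hWsymm.symm _ _ hballq
  -- the chain of the approximating pair, at level W
  have hWnhds : W ∈ nhdsSet (Set.diagonal X) := hWU
  obtain ⟨n, hn, c, hc0, hcn, hcstep, hcpt⟩ := hR.2 W hWnhds
  -- the adjusted chain
  refine ⟨n, hn, fun i => if i = 0 then p else if i = n then q else c i, by simp, ?_, ?_, ?_⟩
  · have h1 : n ≠ 0 := by omega
    simp [h1]
  · intro i hi
    by_cases h0 : i = 0
    · subst h0
      by_cases h1 : 1 = n
      · -- single step: (f p, q)
        simp only [if_pos rfl, if_pos h1]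
        have hstep := hcstep 0 hi
        rw [hc0] at hstep
        have hc1 : c 1 = q' := by rw [← h1] at hcn; exact hcn
        rw [hc1] at hstep
        exact hcomp3 hfp hstep hqq'
      · simp only [if_pos rfl, if_neg one_ne_zero, if_neg h1]
        have hstep := hcstep 0 hi
        rw [hc0] at hstep
        exact hcomp2 hfp hstep
    · have hilt : ¬ i = n := by omega
      simp only [if_neg h0, if_neg hilt]
      by_cases h1 : i + 1 = n
      · simp only [if_neg (by omega : ¬ i + 1 = 0), if_pos h1]
        have hstep := hcstep i hi
        rw [h1, hcn] at hstep
        exact hcomp2 hstep hqq'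
      · simp only [if_neg (by omega : ¬ i + 1 = 0), if_neg h1]
        exact hWV (hcstep i hi)
  · intro i hi
    by_cases h0 : i = 0
    · subst h0
      simp only [if_pos rfl]
      exact mem_relImage_self hdiagV (intvl_left_mem hpqG)
    · by_cases h1 : i = n
      · subst h1
        simp only [if_neg h0, if_pos rfl]
        exact mem_relImage_self hdiagV (intvl_right_mem hpqG)
      · simp only [if_neg h0, if_neg h1]
        obtain ⟨s, hs, hsc⟩ := hcpt i hi
        have hsO : s ∈ relImage W (intvl f p q) := hNprop (p', q') hNmem hs
        obtain ⟨t, ht, hts⟩ := hsO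
        exact ⟨t, ht, hcomp2 hts hsc⟩

theorem gRel_subset_RR {f : X → X} (hf : Continuous f) :
    gRel {r : X × X | r.2 = f r.1} ⊆ RR f :=
  gRel_subset_of (graph_subset_RR f) (RR_closed hf) (RR_trans f)

end ChainArg

open Uniformity UniformSpace in
/-- Let `f` be a continuous self-map of a compact Hausdorff space `X`
and `x ∈ X` with `(x,x) ∈ 𝒢f` (for the graph of `f`).  Then the equivalence class
`E = {y | (x,y) ∈ 𝒢f ∧ (y,x) ∈ 𝒢f}` is closed, `f(E) = E`, and the restriction of
`f` to `E` is chain transitive: `𝒞(graph f ∩ (E × E)) = E × E`. -/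
theorem chainTransitive_on_gRel_class
    {X : Type*} [TopologicalSpace X] [CompactSpace X] [T2Space X]
    (f : X → X) (hf : Continuous f) (x : X)
    (G : Set (X × X)) (hG : G = gRel {p : X × X | p.2 = f p.1})
    (hx : (x, x) ∈ G)
    (E : Set X) (hE : E = {y : X | (x, y) ∈ G ∧ (y, x) ∈ G}) :
    IsClosed E ∧ f '' E = E ∧
      chainRel ({p : X × X | p.2 = f p.1} ∩ E ×ˢ E) = E ×ˢ E := by
  subst hG
  subst hE
  set Γ : Set (X × X) := gRel {p : X × X | p.2 = f p.1} with hΓ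
  have hGcl : IsClosed Γ := isClosed_gRel' _
  have hGtr : RelTrans Γ := relTrans_gRel' _
  have hgraph : ∀ a : X, (a, f a) ∈ Γ := mem_graph_gRel f
  set E' : Set X := {y : X | (x, y) ∈ Γ ∧ (y, x) ∈ Γ} with hE'
  have hxE : x ∈ E' := ⟨hx, hx⟩
  -- E is closed
  have hE'closed : IsClosed E' := by
    have h1 : IsClosed ((fun y : X => ((x : X), y)) ⁻¹' Γ) :=
      hGcl.preimage (continuous_const.prodMk continuous_id)
    have h2 : IsClosed ((fun y : X => (y, x)) ⁻¹' Γ) :=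
      hGcl.preimage (continuous_id.prodMk continuous_const)
    exact h1.inter h2
  -- f(E) ⊆ E
  have hfE : ∀ y ∈ E', f y ∈ E' := by
    intro y hy
    obtain ⟨h1, h2⟩ := hy
    constructor
    · exact hGtr x y (f y) h1 (hgraph y)
    · rcases gRel_step_right hf h2 with heq | hst
      · rw [← heq]; exact hx
      · exact hst
  -- E ⊆ f(E)
  have hEf : ∀ y ∈ E', ∃ c ∈ E', f c = y := by
    intro y hy
    obtain ⟨h1, h2⟩ := hy
    rcases gRel_step_left hf h1 with heq | ⟨c, hc, heq⟩
    · exact ⟨x, hxE, heq.symm⟩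
    · refine ⟨c, ⟨hc, ?_⟩, heq.symm⟩
      have hcy : (c, y) ∈ Γ := by
        have := hgraph c
        rw [← heq] at this
        exact this
      exact hGtr c y x hcy h2
  have himg : f '' E' = E' := by
    apply Set.Subset.antisymm
    · rintro _ ⟨y, hy, rfl⟩
      exact hfE y hy
    · intro y hy
      obtain ⟨c, hc, hfc⟩ := hEf y hy
      exact ⟨c, hc, hfc⟩
  -- the restricted graph
  set g : Set (X × X) := {p : X × X | p.2 = f p.1} ∩ E' ×ˢ E' with hg
  -- first coordinate of a chain is in E
  have hiter_fst : ∀ (V : Set (X × X)) (n : ℕ) (a b : X),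
      (a, b) ∈ relIterate (relComp V g) n → 1 ≤ n → a ∈ E' := by
    intro V n
    induction n with
    | zero => intro a b _ h; exact absurd h (by omega)
    | succ m ih =>
      intro a b hab _
      obtain ⟨y, hy1, hy2⟩ := hab
      rcases Nat.eq_zero_or_pos m with hm | hm
      · subst hm
        have hay : a = y := hy1
        obtain ⟨w, hw1, hw2⟩ := hy2
        rw [hay]
        exact hw1.2.1
      · exact ih a y hy1 hm
  -- second coordinate of a chain pair is in E
  have hsnd : ∀ a b : X, (a, b) ∈ chainRel g → b ∈ E' := by
    intro a b h
    by_contra hbE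
    have hVopen : IsOpen ({p : X × X | p.2 ≠ b} ∪ {p : X × X | p.1 ∉ E'}) := by
      have h1 : IsOpen {p : X × X | p.2 ≠ b} :=
        (isOpen_compl_singleton (x := b)).preimage continuous_snd
      have h2 : IsOpen {p : X × X | p.1 ∉ E'} :=
        hE'closed.isOpen_compl.preimage continuous_fst
      exact h1.union h2
    have hVdiag : Set.diagonal X ⊆ ({p : X × X | p.2 ≠ b} ∪ {p : X × X | p.1 ∉ E'}) := by
      rintro ⟨c, c'⟩ hc
      have hcc : c = c' := hc
      subst hcc
      by_cases hcE : c ∈ E'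
      · refine Set.mem_union_left _ ?_
        show c ≠ b
        intro hcb
        rw [hcb] at hcE
        exact hbE hcE
      · exact Set.mem_union_right _ hcE
    have hV : ({p : X × X | p.2 ≠ b} ∪ {p : X × X | p.1 ∉ E'}) ∈ nhdsSet (Set.diagonal X) :=
      hVopen.mem_nhdsSet.mpr hVdiag
    have h0 := Set.mem_iInter₂.1 h _ hV
    obtain ⟨n, hn, hmem⟩ := Set.mem_iUnion₂.1 h0
    have hn' : 1 ≤ n := hn
    obtain ⟨m, rfl⟩ : ∃ m, n = m + 1 := ⟨n - 1, by omega⟩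
    obtain ⟨y, hy1, hy2⟩ := hmem
    obtain ⟨w, hw1, hw2⟩ := hy2
    have hwE : w ∈ E' := hw1.2.2
    rcases (Set.mem_union _ _ _).1 hw2 with h' | h'
    · exact h' rfl
    · exact h' hwE
  have hsub1 : chainRel g ⊆ E' ×ˢ E' := by
    rintro ⟨a, b⟩ h
    constructor
    · have h0 := Set.mem_iInter₂.1 h Set.univ Filter.univ_mem
      obtain ⟨n, hn, hmem⟩ := Set.mem_iUnion₂.1 h0
      exact hiter_fst _ n a b hmem hn
    · exact hsnd a b h
  have hsub2 : E' ×ˢ E' ⊆ chainRel g := by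
    rintro ⟨y, z⟩ ⟨hyE, hzE⟩
    have hyzG : (y, z) ∈ Γ := hGtr y x z hyE.2 hzE.1
    have hyzR : (y, z) ∈ RR f := gRel_subset_RR hf hyzG
    have hIsub : intvl f y z ⊆ E' := by
      rintro w ⟨h1, h2⟩
      rcases h1 with h1 | h1
      · rcases h2 with h2 | h2
        · exact ⟨hGtr x y w hyE.1 h1, hGtr w z x h2 hzE.2⟩
        · subst h2; exact hzE
      · subst h1; exact hyE
    show (y, z) ∈ ⋂ V ∈ nhdsSet (Set.diagonal X), orbitRel (relComp V g)
    refine Set.mem_iInter₂.2 fun Vt hVt => ?_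
    letI uX : UniformSpace X := uniformSpaceOfCompactR1
    have hVtU : Vt ∈ 𝓤 X := hVt
    obtain ⟨U₁, hU₁, hU₁symm, hU₁c⟩ := comp_comp_symm_mem_uniformity_sets hVtU
    have hUC : UniformContinuous f := CompactSpace.uniformContinuous_of_continuous hf
    have hW2 : {w : X × X | (f w.1, f w.2) ∈ U₁} ∈ 𝓤 X := hUC hU₁
    obtain ⟨Vs, hVs, hVssymm, hVssub⟩ :
        ∃ Vs ∈ 𝓤 X, SetRel.IsSymm Vs ∧
          Vs ⊆ U₁ ∩ {w : X × X | (f w.1, f w.2) ∈ U₁} :=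
      ⟨SetRel.symmetrize _, symmetrize_mem_uniformity (Filter.inter_mem hU₁ hW2),
        inferInstance, SetRel.symmetrize_subset_self⟩
    have hVsnhds : Vs ∈ nhdsSet (Set.diagonal X) := hVs
    obtain ⟨n, hn, c, hc0, hcn, hcstep, hcpt⟩ := hyzR.2 Vs hVsnhds
    have hc0' : c 0 = y := hc0
    have hcn' : c n = z := hcn
    -- choose anchors in E'
    have hanch : ∀ i, ∃ s : X,
        s ∈ E' ∧ (i = 0 → s = y) ∧ (i = n → s = z) ∧ (i ≤ n → (s, c i) ∈ Vs) := by
      intro i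
      by_cases h0 : i = 0
      · subst h0
        refine ⟨y, hyE, fun _ => rfl, ?_, ?_⟩
        · intro h; omega
        · intro _
          rw [hc0']
          exact refl_mem_uniformity hVs
      · by_cases h1 : i = n
        · subst h1
          refine ⟨z, hzE, fun h => absurd h h0, fun _ => rfl, ?_⟩
          intro _
          rw [hcn']
          exact refl_mem_uniformity hVs
        · by_cases h2 : i ≤ n
          · obtain ⟨s, hs, hsc⟩ := hcpt i h2
            exact ⟨s, hIsub hs, fun h => absurd h h0, fun h => absurd h h1, fun _ => hsc⟩
          · exact ⟨y, hyE, fun h => absurd h h0, fun h => absurd h h1, fun h => absurd h h2⟩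
    choose e he using hanch
    -- each internal step is a `Vt ∘ g` step
    have hjump : ∀ i < n, (e i, e (i + 1)) ∈ relComp Vt g := by
      intro i hi
      have h1 : (e i, c i) ∈ Vs := (he i).2.2.2 (by omega)
      have h2 : (e (i + 1), c (i + 1)) ∈ Vs := (he (i + 1)).2.2.2 (by omega)
      have h3 : (f (e i), f (c i)) ∈ U₁ := (hVssub h1).2
      have h4 : (f (c i), c (i + 1)) ∈ U₁ := (hVssub (hcstep i hi)).1
      have h5 : (c (i + 1), e (i + 1)) ∈ U₁ := (hVssub (hVssymm.symm _ _ h2)).1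
      have h6 : (f (e i), e (i + 1)) ∈ Vt := by
        refine hU₁c (SetRel.mem_comp.2 ⟨c (i + 1), SetRel.mem_comp.2 ⟨f (c i), h3, h4⟩, h5⟩)
      refine ⟨f (e i), ⟨rfl, ?_⟩, h6⟩
      exact ⟨(he i).1, hfE _ (he i).1⟩
    -- assemble the chain
    have hiter : ∀ i, 1 ≤ i → i ≤ n → (y, e i) ∈ relIterate (relComp Vt g) i := by
      intro i
      induction i with
      | zero => intro h _; omega
      | succ m ih =>
        intro _ hile
        by_cases hm : m = 0
        · subst hm
          refine ⟨y, rfl, ?_⟩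
          have he0 : e 0 = y := (he 0).2.1 rfl
          rw [← he0]
          exact hjump 0 (by omega)
        · exact ⟨e m, ih (by omega) (by omega), hjump m (by omega)⟩
    have hfinal : (y, z) ∈ relIterate (relComp Vt g) n := by
      have h := hiter n hn (le_refl n)
      have hen : e n = z := (he n).2.2.1 rfl
      rwa [hen] at h
    show (y, z) ∈ ⋃ m ∈ Set.Ici (1 : ℕ), relIterate (relComp Vt g) m
    exact Set.mem_iUnion₂.2 ⟨n, hn, hfinal⟩
  exact ⟨hE'closed, himg, Set.Subset.antisymm hsub1 hsub2⟩
end
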